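/- (Theorem 4.3.) For every word w of H, y ⧢ w − y * w = D̄(w) − D(w). -/

import Mathlib

/-- `H = ℚ⟨x,y⟩`, modeled as the monoid algebra of the free monoid on two letters
(`false` standing for `x` and `true` standing for `y`). -/
abbrev H : Type := MonoidAlgebra ℚ (FreeMonoid Bool)

/-- The word (monomial) of `H` corresponding to a list of letters. -/
noncomputable def wordAlg (w : List Bool) : H :=
  MonoidAlgebra.of ℚ (FreeMonoid Bool) (FreeMonoid.ofList w)

/-- The generator `x`. -/
noncomputable def X : H := wordAlg [false]
/-- The generator `y`. -/
noncomputable def Y : H := wordAlg [true]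

/-- The word `x^{p-1} y` (i.e. `z_p`), as a list of letters. -/
def zW (p : ℕ) : List Bool := List.replicate (p - 1) false ++ [true]

private lemma wA_app (u v : List Bool) : wordAlg (u ++ v) = wordAlg u * wordAlg v := by
  simp [wordAlg, ← map_mul]

private lemma wA_nil : wordAlg [] = 1 := by simp [wordAlg]; rfl

private lemma wA_cons (a : Bool) (w : List Bool) :
    wordAlg (a :: w) = wordAlg [a] * wordAlg w := by
  rw [← wA_app]; rfl

private lemma X_ne : (X : H) ≠ 0 := by
  simp [X, wordAlg, MonoidAlgebra.of_apply]

private lemma z1 : zW 1 = [true] := rfl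
private lemma z2 : zW 2 = [false, true] := rfl

private lemma zW_succ (p : ℕ) (hp : 1 ≤ p) : zW (p + 1) = false :: zW p := by
  simp only [zW, Nat.add_sub_cancel]
  conv_lhs => rw [show p = p - 1 + 1 by omega, List.replicate_succ]
  simp

private lemma decomp (w : List Bool) :
    (∃ k, w = List.replicate k false) ∨ (∃ p w', 1 ≤ p ∧ w = zW p ++ w') := by
  induction w with
  | nil => exact Or.inl ⟨0, rfl⟩
  | cons a u ih =>
    cases a with
    | true => exact Or.inr ⟨1, u, le_rfl, by simp [zW]⟩
    | false =>
      rcases ih with ⟨k, rfl⟩ | ⟨p, w', hp, rfl⟩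
      · exact Or.inl ⟨k + 1, rfl⟩
      · exact Or.inr ⟨p + 1, w', by omega, by rw [zW_succ p hp]; rfl⟩

private lemma revrev (w : List Bool) :
    (((((w.map (fun b => !b)).reverse)).map (fun b => !b)).reverse) = w := by
  simp only [List.map_reverse, List.reverse_reverse, List.map_map]
  have : ((fun b => !b) ∘ fun b => !b) = id := by funext b; simp
  rw [this, List.map_id]

/-- **Theorem 4.3.**  Let `⧢` be the shuffle product, `*` the harmonic product,
`τ` the anti-automorphism of `H` exchanging `x` and `y`, and `D` the derivation with
`D(x) = 0`, `D(y) = xy`; set `D̄ = τ∘D∘τ`.  Then for every word `w` of `H`,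
`y ⧢ w - y * w = D̄(w) - D(w)`. -/
theorem shuffle_sub_harmonic_eq_Dbar_sub_D
    (sh : H →ₗ[ℚ] H →ₗ[ℚ] H)
    (sh_one : ∀ w : List Bool, sh 1 (wordAlg w) = wordAlg w ∧ sh (wordAlg w) 1 = wordAlg w)
    (sh_rec : ∀ (a b : Bool) (w₁ w₂ : List Bool),
      sh (wordAlg (a :: w₁)) (wordAlg (b :: w₂)) =
        wordAlg [a] * sh (wordAlg w₁) (wordAlg (b :: w₂)) +
          wordAlg [b] * sh (wordAlg (a :: w₁)) (wordAlg w₂))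
    (st : H →ₗ[ℚ] H →ₗ[ℚ] H)
    (st_one : ∀ w : List Bool, st 1 (wordAlg w) = wordAlg w ∧ st (wordAlg w) 1 = wordAlg w)
    (st_x : ∀ (p : ℕ), 1 ≤ p → ∀ w : List Bool,
      st (wordAlg (List.replicate p false)) (wordAlg w) =
          wordAlg (w ++ List.replicate p false) ∧
        st (wordAlg w) (wordAlg (List.replicate p false)) =
          wordAlg (w ++ List.replicate p false))
    (st_rec : ∀ (p q : ℕ), 1 ≤ p → 1 ≤ q → ∀ (w₁ w₂ : List Bool),
      st (wordAlg (zW p ++ w₁)) (wordAlg (zW q ++ w₂)) =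
        wordAlg (zW p) * st (wordAlg w₁) (wordAlg (zW q ++ w₂)) +
          wordAlg (zW q) * st (wordAlg (zW p ++ w₁)) (wordAlg w₂) +
          wordAlg (zW (p + q)) * st (wordAlg w₁) (wordAlg w₂))
    (tau : H →ₗ[ℚ] H) (tau_mul : ∀ u v : H, tau (u * v) = tau v * tau u)
    (tau_x : tau X = Y) (tau_y : tau Y = X)
    (D : H →ₗ[ℚ] H) (D_mul : ∀ u v : H, D (u * v) = D u * v + u * D v)
    (D_x : D X = 0) (D_y : D Y = X * Y) :
    ∀ w : List Bool,
      sh Y (wordAlg w) - st Y (wordAlg w) =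
        tau (D (tau (wordAlg w))) - D (wordAlg w) := by
  have hY : Y = wordAlg [true] := rfl
  have hX : X = wordAlg [false] := rfl
  -- τ(1) = 1
  have tau_one : tau 1 = 1 := by
    have h : (tau 1 - 1) * X = 0 := by
      rw [sub_mul, one_mul, ← tau_y, ← tau_mul, mul_one, sub_self]
    rcases mul_eq_zero.1 h with h | h
    · exact sub_eq_zero.1 h
    · exact absurd h X_ne
  -- D(1) = 0
  have D_one : D 1 = 0 := by
    have h := D_mul 1 1
    simp only [one_mul, mul_one] at h
    exact (left_eq_add.mp h)
  -- τ on letters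
  have tau_letter : ∀ a : Bool, tau (wordAlg [a]) = wordAlg [!a] := by
    intro a; cases a
    · exact tau_x
    · exact tau_y
  -- τ on words
  have tau_word : ∀ w : List Bool, tau (wordAlg w) = wordAlg ((w.map (fun b => !b)).reverse) := by
    intro w
    induction w with
    | nil => rw [wA_nil, tau_one]; simp [wA_nil]
    | cons a u ih =>
      rw [wA_cons, tau_mul, ih, tau_letter, ← wA_app]
      congr 1
      simp
  -- D on a cons, by letter
  have XYw : (X * Y : H) = wordAlg [false, true] := by
    rw [hX, hY, ← wA_app]; rfl
  have D_consF : ∀ w : List Bool,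
      D (wordAlg (false :: w)) = wordAlg [false] * D (wordAlg w) := by
    intro w
    rw [wA_cons, D_mul, show D (wordAlg [false]) = 0 from D_x, zero_mul, zero_add]
  have D_consT : ∀ w : List Bool,
      D (wordAlg (true :: w)) = wordAlg (false :: true :: w) + wordAlg [true] * D (wordAlg w) := by
    intro w
    rw [wA_cons, D_mul, show D (wordAlg [true]) = X * Y from D_y, XYw, ← wA_app]
    rfl
  -- D̄ on a cons, by letter
  have Db_consT : ∀ w : List Bool,
      tau (D (tau (wordAlg (true :: w)))) = wordAlg [true] * tau (D (tau (wordAlg w))) := by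
    intro w
    rw [tau_word (true :: w)]
    rw [show (((true :: w).map (fun b => !b)).reverse)
        = ((w.map (fun b => !b)).reverse) ++ [false] from by simp]
    rw [wA_app, D_mul, show D (wordAlg [false]) = 0 from D_x, mul_zero, add_zero,
      tau_mul, tau_letter, ← tau_word w]
    rfl
  have tau_ft : tau (wordAlg [false, true]) = wordAlg [false, true] := by
    rw [tau_word, show ((([false, true] : List Bool).map (fun b => !b)).reverse)
      = [false, true] from by simp]
  have Db_consF : ∀ w : List Bool,
      tau (D (tau (wordAlg (false :: w)))) =
        wordAlg (false :: true :: w) + wordAlg [false] * tau (D (tau (wordAlg w))) := by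
    intro w
    rw [tau_word (false :: w),
      show (((false :: w).map (fun b => !b)).reverse)
          = ((w.map (fun b => !b)).reverse) ++ [true] from by simp,
      wA_app, D_mul, show D (wordAlg [true]) = X * Y from D_y, XYw, map_add,
      tau_mul, tau_mul, tau_letter,
      tau_word ((w.map (fun b => !b)).reverse), revrev, ← tau_word w, tau_ft, ← wA_app,
      add_comm]
    rfl
  -- shuffle recursion
  have sh_cons : ∀ (a : Bool) (w : List Bool),
      sh Y (wordAlg (a :: w)) = wordAlg [a] * sh Y (wordAlg w) + wordAlg (true :: a :: w) := by
    intro a w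
    have h := sh_rec true a [] w
    rw [wA_nil, (sh_one (a :: w)).1] at h
    rw [hY, h, ← wA_cons]
    exact add_comm _ _
  -- harmonic product with powers of x
  have st_Y_xk : ∀ k : ℕ, st Y (wordAlg (List.replicate k false))
      = wordAlg (true :: List.replicate k false) := by
    intro k
    cases k with
    | zero =>
      rw [show List.replicate 0 false = ([] : List Bool) from rfl, wA_nil, hY]
      exact (st_one [true]).2
    | succ k =>
      have h := (st_x (k + 1) (by omega) [true]).2
      rw [hY, h]
      rfl
  -- harmonic recursion on a z-block
  have st_Y_z : ∀ p : ℕ, 1 ≤ p → ∀ w' : List Bool,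
      st Y (wordAlg (zW p ++ w')) =
        wordAlg (true :: (zW p ++ w')) + wordAlg (zW p) * st Y (wordAlg w')
          + wordAlg (zW (p + 1) ++ w') := by
    intro p hp w'
    have h := st_rec 1 p le_rfl hp [] w'
    rw [List.append_nil, z1, wA_nil, (st_one (zW p ++ w')).1, (st_one w').1,
      show 1 + p = p + 1 from Nat.add_comm 1 p] at h
    rw [hY, h, ← wA_cons, ← wA_app]
  -- harmonic recursion: leading y
  have st_true : ∀ w : List Bool,
      st Y (wordAlg (true :: w)) =
        wordAlg (true :: true :: w) + wordAlg [true] * st Y (wordAlg w)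
          + wordAlg (false :: true :: w) := by
    intro w
    have h := st_Y_z 1 le_rfl w
    rw [z1, z2] at h
    rw [show ([true] : List Bool) ++ w = true :: w from rfl] at h
    rw [h]
    rfl
  -- harmonic recursion: leading x
  have st_false : ∀ w : List Bool,
      st Y (wordAlg (false :: w)) + wordAlg (false :: true :: w) =
        wordAlg [false] * st Y (wordAlg w) + wordAlg (true :: false :: w) := by
    intro w
    rcases decomp w with ⟨k, rfl⟩ | ⟨p, w', hp, rfl⟩
    · rw [show (false :: List.replicate k false) = List.replicate (k + 1) false from
        List.replicate_succ.symm]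
      rw [st_Y_xk (k + 1), st_Y_xk k, ← wA_cons,
        show (true :: List.replicate (k + 1) false) = true :: false :: List.replicate k false
          from by rw [List.replicate_succ]]
      exact add_comm _ _
    · rw [show (false :: (zW p ++ w')) = zW (p + 1) ++ w' from by rw [zW_succ p hp]; rfl]
      rw [st_Y_z (p + 1) (by omega) w', st_Y_z p hp w']
      rw [zW_succ (p + 1) (by omega), zW_succ p hp]
      rw [mul_add, mul_add, ← wA_cons, ← wA_cons, ← mul_assoc, ← wA_cons]
      simp only [List.cons_append]
      abel
  -- main induction
  intro w
  induction w with
  | nil =>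
    rw [wA_nil, hY, (sh_one [true]).2, (st_one [true]).2, sub_self, tau_one, D_one,
      map_zero]
    simp
  | cons a u ih =>
    have hdb : tau (D (tau (wordAlg u)))
        = sh Y (wordAlg u) - st Y (wordAlg u) + D (wordAlg u) :=
      sub_eq_iff_eq_add.mp ih.symm
    cases a with
    | true =>
      have hst := st_true u
      rw [sh_cons, hst, D_consT, Db_consT, hdb, mul_add, mul_sub]
      abel
    | false =>
      have hst : st Y (wordAlg (false :: u)) =
          wordAlg [false] * st Y (wordAlg u) + wordAlg (true :: false :: u)
            - wordAlg (false :: true :: u) := by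
        rw [eq_sub_iff_add_eq]; exact st_false u
      rw [sh_cons, hst, D_consF, Db_consF, hdb, mul_add, mul_sub]
      abel
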